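/- arXiv:1708.09811 — 2 statements merged into one kernel-verified Lean document; each statement's English description precedes it below -/
import Mathlib

section
/- The Fixed Share algorithm (MarkovHedge with uniform initial distribution θ_1 = (1/M,…,1/M) and transitions θ_t(i|j) = (1−α)·1_{i=j} + α/M for a fixed α ∈ (0,1)) achieves, for every T ≥ 1 and every sequence of experts (i_1,…,i_T) with k shifts (times t ≥ 2 with i_t ≠ i_{t−1}), the regret bound Σ_{t=1}^T ℓ_t − Σ_{t=1}^T ℓ_{i_t,t} ≤ ((k+1)/η) log M + (k/η) log(1/α) + ((T−k−1)/η) log(1/(1−α)). Moreover, with the choice α = k/(T−1) this bound equals ((k+1)/η) log M + ((T−1)/η) H(k/(T−1)), where H(p) = −p log p − (1−p) log(1−p), which is at most ((k+1)/η) log M + (k/η) log((T−1)/k) + k/η. -/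
open scoped Classical

/-- **Fixed Share regret bound (Corollary 1).**
Fixed Share (MarkovHedge with uniform initial distribution and transitions
θ_t(i|j) = (1−α)·1_{i=j} + α/M) achieves, for every T ≥ 1 and every sequence of experts
with k shifts, Σ ℓ_t − Σ ℓ_{i_t,t} ≤ ((k+1)/η) log M + (k/η) log(1/α)
+ ((T−k−1)/η) log(1/(1−α)); moreover, for α = k/(T−1) this bound equals
((k+1)/η) log M + ((T−1)/η) H(k/(T−1)), which is at most
((k+1)/η) log M + (k/η) log((T−1)/k) + k/η. -/
theorem fixedShare_regret
    {E : Type*} [AddCommGroup E] [Module ℝ E] {Y : Type*}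
    (X : Set E) (ℓ : E → Y → ℝ) (η : ℝ) (hη : 0 < η)
    (hexp : ∀ (yy : Y) (N : ℕ), 1 ≤ N → ∀ xs : Fin N → E, (∀ i, xs i ∈ X) →
      ∀ vv : Fin N → ℝ, (∀ i, 0 ≤ vv i) → (∑ i, vv i) = 1 →
      ℓ (∑ i, vv i • xs i) yy ≤ -(1/η) * Real.log (∑ i, vv i * Real.exp (-η * ℓ (xs i) yy)))
    (M : ℕ) (hM : 1 ≤ M)
    (α : ℝ) (hα : 0 < α ∧ α < 1)
    (xe : Fin M → ℕ → E) (hxe : ∀ i t, xe i t ∈ X) (y : ℕ → Y)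
    -- Fixed Share weights: uniform initialization, posterior, then sharing
    (v : ℕ → Fin M → ℝ)
    (hv1 : ∀ i, v 1 i = 1 / (M : ℝ))
    (hvupd : ∀ t, 1 ≤ t → ∀ i, v (t+1) i =
      (1 - α) *
        (v t i * Real.exp (-η * ℓ (xe i t) (y t)) /
          ∑ j, v t j * Real.exp (-η * ℓ (xe j t) (y t)))
      + α / (M : ℝ))
    (xl : ℕ → E)
    (hxl : ∀ t, 1 ≤ t → xl t = ∑ i, v t i • xe i t) :
    ∀ T : ℕ, 1 ≤ T → ∀ iseq : ℕ → Fin M,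
      ∀ k : ℕ, k = ((Finset.Icc 2 T).filter (fun t => iseq t ≠ iseq (t-1))).card →
      ((∑ t ∈ Finset.Icc 1 T, ℓ (xl t) (y t))
          - (∑ t ∈ Finset.Icc 1 T, ℓ (xe (iseq t) t) (y t))
        ≤ (((k : ℝ) + 1) / η) * Real.log (M : ℝ)
          + ((k : ℝ) / η) * Real.log (1 / α)
          + (((T : ℝ) - (k : ℝ) - 1) / η) * Real.log (1 / (1 - α)))
      ∧ (α = (k : ℝ) / ((T : ℝ) - 1) →
          ((((k : ℝ) + 1) / η) * Real.log (M : ℝ)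
              + ((k : ℝ) / η) * Real.log (1 / α)
              + (((T : ℝ) - (k : ℝ) - 1) / η) * Real.log (1 / (1 - α))
            = (((k : ℝ) + 1) / η) * Real.log (M : ℝ)
              + (((T : ℝ) - 1) / η) *
                (-(((k : ℝ) / ((T : ℝ) - 1)) * Real.log ((k : ℝ) / ((T : ℝ) - 1)))
                  - (1 - (k : ℝ) / ((T : ℝ) - 1)) * Real.log (1 - (k : ℝ) / ((T : ℝ) - 1))))
          ∧ ((((k : ℝ) + 1) / η) * Real.log (M : ℝ)
              + (((T : ℝ) - 1) / η) *
                (-(((k : ℝ) / ((T : ℝ) - 1)) * Real.log ((k : ℝ) / ((T : ℝ) - 1)))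
                  - (1 - (k : ℝ) / ((T : ℝ) - 1)) * Real.log (1 - (k : ℝ) / ((T : ℝ) - 1)))
            ≤ (((k : ℝ) + 1) / η) * Real.log (M : ℝ)
              + ((k : ℝ) / η) * Real.log (((T : ℝ) - 1) / (k : ℝ))
              + (k : ℝ) / η)) := by
  obtain ⟨hα0, hα1⟩ := hα
  have hη' : η ≠ 0 := hη.ne'
  have hM0 : (0:ℝ) < (M:ℝ) := by exact_mod_cast hM
  have h1α : (0:ℝ) < 1 - α := by linarith
  have hne : Nonempty (Fin M) := ⟨⟨0, hM⟩⟩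
  intro T hT iseq k hk
  set Z : ℕ → ℝ := fun t => ∑ j, v t j * Real.exp (-η * ℓ (xe j t) (y t)) with hZdef
  set L : ℕ → ℝ := fun t => ℓ (xe (iseq t) t) (y t) with hLdef
  set c : ℕ → ℝ := fun t => if iseq t = iseq (t-1) then 1 - α else α / (M:ℝ) with hcdef
  have hZ : ∀ t, (∑ j, v t j * Real.exp (-η * ℓ (xe j t) (y t))) = Z t := fun t => rfl
  have hL : ∀ t, ℓ (xe (iseq t) t) (y t) = L t := fun t => rfl
  have hc_pos : ∀ t, 0 < c t := by
    intro t
    by_cases h : iseq t = iseq (t-1) <;> simp only [hcdef, h, if_true, if_false, if_pos, if_neg, not_false_iff]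
    · linarith
    · positivity
  have hprob : ∀ t : ℕ, 1 ≤ t → (∀ i, 0 < v t i) ∧ (∑ i, v t i) = 1 := by
    intro t ht
    induction t, ht using Nat.le_induction with
    | base =>
      refine ⟨fun i => by rw [hv1]; positivity, ?_⟩
      simp only [hv1, Finset.sum_const, Finset.card_univ, Fintype.card_fin, nsmul_eq_mul]
      field_simp
    | succ n hn ih =>
      have hZn : 0 < Z n :=
        Finset.sum_pos (fun j _ => mul_pos (ih.1 j) (Real.exp_pos _)) Finset.univ_nonempty
      constructor
      · intro i
        rw [hvupd n hn i, hZ n]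
        have h1 : 0 ≤ (1-α) * (v n i * Real.exp (-η * ℓ (xe i n) (y n)) / Z n) := by
          have := (ih.1 i).le
          positivity
        have h2 : 0 < α / (M:ℝ) := by positivity
        linarith
      · have e0 : ∑ i, v (n+1) i
            = ∑ i, ((1-α) * (v n i * Real.exp (-η * ℓ (xe i n) (y n)) / Z n) + α/(M:ℝ)) := by
          refine Finset.sum_congr rfl fun i _ => ?_
          rw [hvupd n hn i, hZ n]
        rw [e0, Finset.sum_add_distrib]
        have e1 : ∑ i : Fin M, (1-α) * (v n i * Real.exp (-η * ℓ (xe i n) (y n)) / Z n)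
            = 1 - α := by
          rw [← Finset.mul_sum, ← Finset.sum_div, hZ n, div_self hZn.ne', mul_one]
        have e2 : ∑ _i : Fin M, α/(M:ℝ) = α := by
          simp only [Finset.sum_const, Finset.card_univ, Fintype.card_fin, nsmul_eq_mul]
          field_simp
        rw [e1, e2]; ring
  have hZpos : ∀ t, 1 ≤ t → 0 < Z t := fun t ht =>
    Finset.sum_pos (fun j _ => mul_pos ((hprob t ht).1 j) (Real.exp_pos _)) Finset.univ_nonempty
  -- key induction
  have key : ∀ u : ℕ,
      (1/(M:ℝ)) * (∏ s ∈ Finset.Icc 2 (u+1), c s) * Real.exp (-η * ∑ s ∈ Finset.Icc 1 u, L s)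
        ≤ (∏ s ∈ Finset.Icc 1 u, Z s) * v (u+1) (iseq (u+1)) := by
    intro u
    induction u with
    | zero =>
      rw [show Finset.Icc 2 1 = ∅ from Finset.Icc_eq_empty (by omega),
        show Finset.Icc 1 0 = ∅ from Finset.Icc_eq_empty (by omega)]
      simp [hv1]
    | succ n ih =>
      have h1 : (1:ℕ) ≤ n + 1 := by omega
      have hZn : 0 < Z (n+1) := hZpos (n+1) h1
      have hPZ : 0 < ∏ s ∈ Finset.Icc 1 n, Z s :=
        Finset.prod_pos (fun s hs => hZpos s (Finset.mem_Icc.mp hs).1)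
      have hvpos : 0 < v (n+1) (iseq (n+1)) := (hprob (n+1) h1).1 _
      have hstep : c (n+2) * (v (n+1) (iseq (n+1)) * Real.exp (-η * L (n+1)) / Z (n+1))
          ≤ v (n+2) (iseq (n+2)) := by
        have hfrac : v (n+1) (iseq (n+1)) * Real.exp (-η * L (n+1)) / Z (n+1) ≤ 1 := by
          rw [div_le_one hZn]
          calc v (n+1) (iseq (n+1)) * Real.exp (-η * L (n+1))
              = v (n+1) (iseq (n+1)) * Real.exp (-η * ℓ (xe (iseq (n+1)) (n+1)) (y (n+1))) := by
                rw [hL]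
            _ ≤ Z (n+1) := by
                rw [← hZ (n+1)]
                exact Finset.single_le_sum
                  (f := fun j => v (n+1) j * Real.exp (-η * ℓ (xe j (n+1)) (y (n+1))))
                  (fun j _ => (mul_pos ((hprob (n+1) h1).1 j) (Real.exp_pos _)).le)
                  (Finset.mem_univ _)
        have hfrac0 : 0 ≤ v (n+1) (iseq (n+1)) * Real.exp (-η * L (n+1)) / Z (n+1) := by
          have := hvpos.le
          positivity
        rw [hvupd (n+1) h1 (iseq (n+2)), hZ (n+1)]
        by_cases h : iseq (n+2) = iseq (n+1)
        · have hc : c (n+2) = 1 - α := by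
            simp only [hcdef, show (n+2)-1 = n+1 from rfl, h, if_true]
          rw [hc, h, hL]
          have h2 : 0 < α / (M:ℝ) := by positivity
          linarith
        · have hc : c (n+2) = α / (M:ℝ) := by
            simp only [hcdef, show (n+2)-1 = n+1 from rfl, h, if_false]
          rw [hc]
          have h3 : 0 ≤ (1-α) * (v (n+1) (iseq (n+2)) * Real.exp (-η * ℓ (xe (iseq (n+2)) (n+1)) (y (n+1))) / Z (n+1)) := by
            have := ((hprob (n+1) h1).1 (iseq (n+2))).le
            positivity
          have h4 : α / (M:ℝ) * (v (n+1) (iseq (n+1)) * Real.exp (-η * L (n+1)) / Z (n+1)) ≤ α / (M:ℝ) * 1 :=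
            mul_le_mul_of_nonneg_left hfrac (by positivity)
          calc α / (M:ℝ) * (v (n+1) (iseq (n+1)) * Real.exp (-η * ℓ (xe (iseq (n+1)) (n+1)) (y (n+1))) / Z (n+1))
              = α / (M:ℝ) * (v (n+1) (iseq (n+1)) * Real.exp (-η * L (n+1)) / Z (n+1)) := by rw [hL]
            _ ≤ α / (M:ℝ) := by linarith
            _ ≤ _ := by linarith
      rw [Finset.prod_Icc_succ_top (show 2 ≤ n+1+1 by omega),
        Finset.sum_Icc_succ_top (show 1 ≤ n+1 by omega),
        Finset.prod_Icc_succ_top (show 1 ≤ n+1 by omega)]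
      have hq : 0 < c (n+2) * Real.exp (-η * L (n+1)) := mul_pos (hc_pos _) (Real.exp_pos _)
      calc (1/(M:ℝ)) * ((∏ s ∈ Finset.Icc 2 (n+1), c s) * c (n+1+1))
            * Real.exp (-η * ((∑ s ∈ Finset.Icc 1 n, L s) + L (n+1)))
          = ((1/(M:ℝ)) * (∏ s ∈ Finset.Icc 2 (n+1), c s)
              * Real.exp (-η * ∑ s ∈ Finset.Icc 1 n, L s))
            * (c (n+2) * Real.exp (-η * L (n+1))) := by
            rw [show -η * ((∑ s ∈ Finset.Icc 1 n, L s) + L (n+1))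
                = -η * (∑ s ∈ Finset.Icc 1 n, L s) + -η * L (n+1) by ring, Real.exp_add]
            ring_nf
        _ ≤ ((∏ s ∈ Finset.Icc 1 n, Z s) * v (n+1) (iseq (n+1)))
            * (c (n+2) * Real.exp (-η * L (n+1))) :=
            mul_le_mul_of_nonneg_right ih hq.le
        _ = ((∏ s ∈ Finset.Icc 1 n, Z s) * Z (n+1))
            * (c (n+2) * (v (n+1) (iseq (n+1)) * Real.exp (-η * L (n+1)) / Z (n+1))) := by
            field_simp
        _ ≤ ((∏ s ∈ Finset.Icc 1 n, Z s) * Z (n+1)) * v (n+2) (iseq (n+2)) :=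
            mul_le_mul_of_nonneg_left hstep (mul_pos hPZ hZn).le
  -- endgame
  obtain ⟨u, rfl⟩ : ∃ u, T = u + 1 := ⟨T - 1, by omega⟩
  have h1u : (1:ℕ) ≤ u + 1 := by omega
  have hZu : 0 < Z (u+1) := hZpos (u+1) h1u
  have hPc : 0 < ∏ s ∈ Finset.Icc 2 (u+1), c s := Finset.prod_pos fun s _ => hc_pos s
  have hprod : (1/(M:ℝ)) * (∏ s ∈ Finset.Icc 2 (u+1), c s)
      * Real.exp (-η * ∑ s ∈ Finset.Icc 1 (u+1), L s)
      ≤ ∏ s ∈ Finset.Icc 1 (u+1), Z s := by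
    rw [Finset.sum_Icc_succ_top (show 1 ≤ u+1 by omega),
      Finset.prod_Icc_succ_top (show 1 ≤ u+1 by omega)]
    have hPZu : 0 < ∏ s ∈ Finset.Icc 1 u, Z s :=
      Finset.prod_pos (fun s hs => hZpos s (Finset.mem_Icc.mp hs).1)
    have step2 : v (u+1) (iseq (u+1)) * Real.exp (-η * L (u+1)) ≤ Z (u+1) := by
      calc v (u+1) (iseq (u+1)) * Real.exp (-η * L (u+1))
          = v (u+1) (iseq (u+1)) * Real.exp (-η * ℓ (xe (iseq (u+1)) (u+1)) (y (u+1))) := by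
            rw [hL]
        _ ≤ Z (u+1) := by
            rw [← hZ (u+1)]
            exact Finset.single_le_sum
              (f := fun j => v (u+1) j * Real.exp (-η * ℓ (xe j (u+1)) (y (u+1))))
              (fun j _ => (mul_pos ((hprob (u+1) h1u).1 j) (Real.exp_pos _)).le)
              (Finset.mem_univ _)
    calc (1/(M:ℝ)) * (∏ s ∈ Finset.Icc 2 (u+1), c s)
          * Real.exp (-η * ((∑ s ∈ Finset.Icc 1 u, L s) + L (u+1)))
        = ((1/(M:ℝ)) * (∏ s ∈ Finset.Icc 2 (u+1), c s)
            * Real.exp (-η * ∑ s ∈ Finset.Icc 1 u, L s)) * Real.exp (-η * L (u+1)) := by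
          rw [show -η * ((∑ s ∈ Finset.Icc 1 u, L s) + L (u+1))
              = -η * (∑ s ∈ Finset.Icc 1 u, L s) + -η * L (u+1) by ring, Real.exp_add]
          ring
      _ ≤ ((∏ s ∈ Finset.Icc 1 u, Z s) * v (u+1) (iseq (u+1))) * Real.exp (-η * L (u+1)) :=
          mul_le_mul_of_nonneg_right (key u) (Real.exp_pos _).le
      _ = (∏ s ∈ Finset.Icc 1 u, Z s) * (v (u+1) (iseq (u+1)) * Real.exp (-η * L (u+1))) := by
          ring
      _ ≤ (∏ s ∈ Finset.Icc 1 u, Z s) * Z (u+1) :=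
          mul_le_mul_of_nonneg_left step2 hPZu.le
  have hA : -Real.log (M:ℝ) + (∑ s ∈ Finset.Icc 2 (u+1), Real.log (c s))
      + (-η * ∑ s ∈ Finset.Icc 1 (u+1), L s)
      ≤ ∑ s ∈ Finset.Icc 1 (u+1), Real.log (Z s) := by
    have hlogle : Real.log ((1/(M:ℝ)) * (∏ s ∈ Finset.Icc 2 (u+1), c s)
          * Real.exp (-η * ∑ s ∈ Finset.Icc 1 (u+1), L s))
        ≤ Real.log (∏ s ∈ Finset.Icc 1 (u+1), Z s) :=
      Real.log_le_log (by positivity) hprod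
    have e1 : Real.log ((1/(M:ℝ)) * (∏ s ∈ Finset.Icc 2 (u+1), c s)
        * Real.exp (-η * ∑ s ∈ Finset.Icc 1 (u+1), L s))
        = -Real.log (M:ℝ) + (∑ s ∈ Finset.Icc 2 (u+1), Real.log (c s))
          + (-η * ∑ s ∈ Finset.Icc 1 (u+1), L s) := by
      rw [Real.log_mul (by positivity) (Real.exp_pos _).ne',
        Real.log_mul (by positivity) hPc.ne', Real.log_exp, one_div, Real.log_inv,
        Real.log_prod (fun s _ => (hc_pos s).ne')]
    have e2 : Real.log (∏ s ∈ Finset.Icc 1 (u+1), Z s)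
        = ∑ s ∈ Finset.Icc 1 (u+1), Real.log (Z s) :=
      Real.log_prod (fun s hs => (hZpos s (Finset.mem_Icc.mp hs).1).ne')
    rw [← e1, ← e2]; exact hlogle
  have hloss : ∑ t ∈ Finset.Icc 1 (u+1), ℓ (xl t) (y t)
      ≤ -(1/η) * ∑ t ∈ Finset.Icc 1 (u+1), Real.log (Z t) := by
    rw [Finset.mul_sum]
    refine Finset.sum_le_sum fun t ht => ?_
    have ht1 := (Finset.mem_Icc.mp ht).1
    rw [hxl t ht1]
    exact hexp (y t) M hM (fun i => xe i t) (fun i => hxe i t) (v t)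
      (fun i => ((hprob t ht1).1 i).le) (hprob t ht1).2
  have hkle : k ≤ u := by
    rw [hk]
    have h1 := Finset.card_filter_le (Finset.Icc 2 (u+1)) (fun t => iseq t ≠ iseq (t-1))
    rw [Nat.card_Icc] at h1
    omega
  have hcardnot : ((Finset.Icc 2 (u+1)).filter (fun t => ¬ iseq t ≠ iseq (t-1))).card = u - k := by
    have h2 := Finset.card_filter_add_card_filter_not
      (s := Finset.Icc 2 (u+1)) (p := fun t => iseq t ≠ iseq (t-1))
    rw [Nat.card_Icc, ← hk] at h2
    omega
  have hcsum : ∑ t ∈ Finset.Icc 2 (u+1), Real.log (c t)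
      = (k:ℝ) * (Real.log α - Real.log (M:ℝ)) + ((u:ℝ) - (k:ℝ)) * Real.log (1-α) := by
    rw [← Finset.sum_filter_add_sum_filter_not (Finset.Icc 2 (u+1))
      (fun t => iseq t ≠ iseq (t-1)) (fun t => Real.log (c t))]
    have e1 : ∑ t ∈ (Finset.Icc 2 (u+1)).filter (fun t => iseq t ≠ iseq (t-1)),
        Real.log (c t) = (k:ℝ) * (Real.log α - Real.log (M:ℝ)) := by
      have hconst : ∀ t ∈ (Finset.Icc 2 (u+1)).filter (fun t => iseq t ≠ iseq (t-1)),
          Real.log (c t) = Real.log α - Real.log (M:ℝ) := by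
        intro t ht
        have hne' := (Finset.mem_filter.mp ht).2
        have hct : c t = α / (M:ℝ) := by simp only [hcdef, if_neg hne']
        rw [hct, Real.log_div hα0.ne' hM0.ne']
      rw [Finset.sum_congr rfl hconst, Finset.sum_const, ← hk, nsmul_eq_mul]
    have e2 : ∑ t ∈ (Finset.Icc 2 (u+1)).filter (fun t => ¬ iseq t ≠ iseq (t-1)),
        Real.log (c t) = ((u:ℝ) - (k:ℝ)) * Real.log (1-α) := by
      have hconst : ∀ t ∈ (Finset.Icc 2 (u+1)).filter (fun t => ¬ iseq t ≠ iseq (t-1)),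
          Real.log (c t) = Real.log (1-α) := by
        intro t ht
        have hne' := not_not.mp (Finset.mem_filter.mp ht).2
        have hct : c t = 1 - α := by simp only [hcdef, if_pos hne']
        rw [hct]
      rw [Finset.sum_congr rfl hconst, Finset.sum_const, hcardnot, nsmul_eq_mul,
        Nat.cast_sub hkle]
    rw [e1, e2]
  have hmain : (∑ t ∈ Finset.Icc 1 (u+1), ℓ (xl t) (y t))
      - (∑ t ∈ Finset.Icc 1 (u+1), L t)
      ≤ (((k:ℝ) + 1) / η) * Real.log (M:ℝ)
        + ((k:ℝ) / η) * Real.log (1 / α)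
        + ((((u + 1 : ℕ)):ℝ) - (k:ℝ) - 1) / η * Real.log (1 / (1 - α)) := by
    have h3 : -(1/η) * (∑ s ∈ Finset.Icc 1 (u+1), Real.log (Z s))
        ≤ -(1/η) * (-Real.log (M:ℝ) + (∑ s ∈ Finset.Icc 2 (u+1), Real.log (c s))
          + (-η * ∑ s ∈ Finset.Icc 1 (u+1), L s)) := by
      apply mul_le_mul_of_nonpos_left hA
      have h4 : (0:ℝ) < 1/η := by positivity
      linarith
    rw [hcsum] at h3
    have hre : -(1/η) * (-Real.log (M:ℝ) + ((k:ℝ) * (Real.log α - Real.log (M:ℝ))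
          + ((u:ℝ) - (k:ℝ)) * Real.log (1-α))
          + (-η * ∑ t ∈ Finset.Icc 1 (u+1), L t))
        - (∑ t ∈ Finset.Icc 1 (u+1), L t)
        = (((k:ℝ) + 1) / η) * Real.log (M:ℝ)
          + ((k:ℝ) / η) * Real.log (1 / α)
          + ((((u + 1 : ℕ)):ℝ) - (k:ℝ) - 1) / η * Real.log (1 / (1 - α)) := by
      rw [one_div α, one_div (1-α), Real.log_inv, Real.log_inv]
      push_cast
      field_simp
      ring
    linarith [hloss, h3, hre]
  refine ⟨hmain, fun hαk => ?_⟩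
  clear hmain hloss hA hprod hcsum hcardnot hZu hPc key hk
  push_cast at hαk ⊢
  rw [show (u:ℝ) + 1 - 1 = (u:ℝ) from by ring] at hαk ⊢
  have hu0 : (0:ℝ) < (u:ℝ) := by
    rcases Nat.eq_zero_or_pos u with h | h
    · subst h
      norm_num at hαk
      rw [hαk] at hα0
      norm_num at hα0
    · exact_mod_cast h
  have hkeq : (k:ℝ) = α * (u:ℝ) := by
    rw [hαk]; field_simp
  have hk0 : (0:ℝ) < (k:ℝ) := by rw [hkeq]; positivity
  constructor
  · rw [← hαk, one_div, one_div, Real.log_inv, Real.log_inv, hkeq]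
    ring
  · rw [← hαk]
    have hlogα : Real.log α = Real.log (k:ℝ) - Real.log (u:ℝ) := by
      rw [hαk, Real.log_div hk0.ne' hu0.ne']
    have hlogd : Real.log ((u:ℝ) / (k:ℝ)) = Real.log (u:ℝ) - Real.log (k:ℝ) :=
      Real.log_div hu0.ne' hk0.ne'
    have e2 : (1-α) * (-Real.log (1-α)) ≤ α := by
      have h5 : Real.log (1-α)⁻¹ ≤ (1-α)⁻¹ - 1 := Real.log_le_sub_one_of_pos (by positivity)
      rw [Real.log_inv] at h5
      have h6 : (1-α) * ((1-α)⁻¹ - 1) = α := by field_simp; ring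
      nlinarith [h1α]
    have e1 : (u:ℝ)/η * (-(α * Real.log α)) = (k:ℝ)/η * Real.log ((u:ℝ)/(k:ℝ)) := by
      rw [hlogα, hlogd, hkeq]; ring
    have e3 : (u:ℝ)/η * ((1-α) * (-Real.log (1-α))) ≤ (u:ℝ)/η * α :=
      mul_le_mul_of_nonneg_left e2 (by positivity)
    have e4 : (u:ℝ)/η * α = (k:ℝ)/η := by rw [hkeq]; ring
    have edist : (u:ℝ)/η * (-(α * Real.log α) - (1-α) * Real.log (1-α))
        = (u:ℝ)/η * (-(α * Real.log α)) + (u:ℝ)/η * ((1-α) * (-Real.log (1-α))) := by ring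
    linarith [e1, e3, e4, edist]
end

section
/- The Decreasing Share algorithm (MarkovHedge with uniform initial distribution and transitions θ_t(i|j) = (1−α_t)·1_{i=j} + α_t/M) achieves, for every T ≥ 1 and every sequence of experts (i_1,…,i_T) with k shifts at times σ_1 < … < σ_k, the regret bound Σ_{t=1}^T ℓ_t − Σ_{t=1}^T ℓ_{i_t,t} ≤ ((k+1)/η) log M + (1/η) Σ_{j=1}^k log(1/α_{σ_j}) + (1/η) Σ_{t=2}^T log(1/(1−α_t)). In particular, with α_t = 1/t this bound becomes ((k+1)/η) log M + (1/η) Σ_{j=1}^k log σ_j + (1/η) log T, which is at most ((k+1)/η) log M + ((k+1)/η) log T. -/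
lemma ds_telescope (a b : ℕ → ℝ) :
    ∀ T : ℕ, 1 ≤ T →
    ∑ t ∈ Finset.Icc 1 T, (a t - b t)
      = a T - b 1 + ∑ t ∈ Finset.Icc 2 T, (a (t-1) - b t) := by
  intro T hT
  induction T, hT using Nat.le_induction with
  | base => simp
  | succ T hT ih =>
    rw [Finset.sum_Icc_succ_top (by omega : 1 ≤ T + 1),
        Finset.sum_Icc_succ_top (by omega : 2 ≤ T + 1), ih]
    simp only [Nat.add_sub_cancel]
    ring

lemma ds_logT (α : ℕ → ℝ) (hα : ∀ t : ℕ, 2 ≤ t → α t = 1 / (t : ℝ)) :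
    ∀ T : ℕ, 1 ≤ T →
    ∑ t ∈ Finset.Icc 2 T, Real.log (1 / (1 - α t)) = Real.log T := by
  intro T hT
  induction T, hT using Nat.le_induction with
  | base => simp
  | succ T hT ih =>
    rw [Finset.sum_Icc_succ_top (by omega : 2 ≤ T + 1), ih]
    have h1 : ((T:ℝ)+1) ≠ 0 := by positivity
    have hT0 : (T:ℝ) ≠ 0 := by
      exact_mod_cast Nat.one_le_iff_ne_zero.mp hT
    rw [hα (T+1) (by omega)]
    push_cast
    have : (1 : ℝ) - 1 / ((T:ℝ)+1) = (T:ℝ) / ((T:ℝ)+1) := by field_simp; ring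
    rw [this, one_div_div, Real.log_div h1 hT0]
    ring

/-- **Decreasing Share regret bound (Corollary 2).**
Decreasing Share (MarkovHedge with uniform initial distribution and transitions
θ_t(i|j) = (1−α_t)·1_{i=j} + α_t/M) achieves, for every T ≥ 1 and every sequence of
experts with k shifts at times σ_1 < … < σ_k,
Σ ℓ_t − Σ ℓ_{i_t,t} ≤ ((k+1)/η) log M + (1/η) Σ_j log(1/α_{σ_j})
+ (1/η) Σ_{t=2}^T log(1/(1−α_t)); in particular, with α_t = 1/t the bound becomes
((k+1)/η) log M + (1/η) Σ_j log σ_j + (1/η) log T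
≤ ((k+1)/η) log M + ((k+1)/η) log T. -/
theorem decreasingShare_regret
    {E : Type*} [AddCommGroup E] [Module ℝ E] {Y : Type*}
    (X : Set E) (ℓ : E → Y → ℝ) (η : ℝ) (hη : 0 < η)
    (hexp : ∀ (yy : Y) (N : ℕ), 1 ≤ N → ∀ xs : Fin N → E, (∀ i, xs i ∈ X) →
      ∀ vv : Fin N → ℝ, (∀ i, 0 ≤ vv i) → (∑ i, vv i) = 1 →
      ℓ (∑ i, vv i • xs i) yy ≤ -(1/η) * Real.log (∑ i, vv i * Real.exp (-η * ℓ (xs i) yy)))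
    (M : ℕ) (hM : 1 ≤ M)
    (α : ℕ → ℝ) (hα : ∀ t, 2 ≤ t → 0 < α t ∧ α t < 1)
    (xe : Fin M → ℕ → E) (hxe : ∀ i t, xe i t ∈ X) (y : ℕ → Y)
    -- Decreasing Share weights: uniform initialization, posterior, then sharing
    (v : ℕ → Fin M → ℝ)
    (hv1 : ∀ i, v 1 i = 1 / (M : ℝ))
    (hvupd : ∀ t, 1 ≤ t → ∀ i, v (t+1) i =
      (1 - α (t+1)) *
        (v t i * Real.exp (-η * ℓ (xe i t) (y t)) /
          ∑ j, v t j * Real.exp (-η * ℓ (xe j t) (y t)))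
      + α (t+1) / (M : ℝ))
    (xl : ℕ → E)
    (hxl : ∀ t, 1 ≤ t → xl t = ∑ i, v t i • xe i t)
    -- horizon and comparison sequence, with shifts exactly at times σ_1 < … < σ_k
    (T : ℕ) (hT : 1 ≤ T) (iseq : ℕ → Fin M)
    (k : ℕ) (σ : ℕ → ℕ)
    (hσmono : ∀ j, 1 ≤ j → j < k → σ j < σ (j+1))
    (hσrange : ∀ j, 1 ≤ j → j ≤ k → 2 ≤ σ j ∧ σ j ≤ T)
    (hshift : ∀ t, 2 ≤ t → t ≤ T →
      (iseq t ≠ iseq (t-1) ↔ ∃ j ∈ Finset.Icc 1 k, σ j = t)) :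
    ((∑ t ∈ Finset.Icc 1 T, ℓ (xl t) (y t))
        - (∑ t ∈ Finset.Icc 1 T, ℓ (xe (iseq t) t) (y t))
      ≤ (((k : ℝ) + 1) / η) * Real.log (M : ℝ)
        + (1/η) * ∑ j ∈ Finset.Icc 1 k, Real.log (1 / α (σ j))
        + (1/η) * ∑ t ∈ Finset.Icc 2 T, Real.log (1 / (1 - α t)))
    ∧ ((∀ t, 2 ≤ t → α t = 1 / (t : ℝ)) →
        ((∑ t ∈ Finset.Icc 1 T, ℓ (xl t) (y t))
            - (∑ t ∈ Finset.Icc 1 T, ℓ (xe (iseq t) t) (y t))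
          ≤ (((k : ℝ) + 1) / η) * Real.log (M : ℝ)
            + (1/η) * ∑ j ∈ Finset.Icc 1 k, Real.log (σ j : ℝ)
            + (1/η) * Real.log (T : ℝ))
        ∧ ((((k : ℝ) + 1) / η) * Real.log (M : ℝ)
            + (1/η) * ∑ j ∈ Finset.Icc 1 k, Real.log (σ j : ℝ)
            + (1/η) * Real.log (T : ℝ)
          ≤ (((k : ℝ) + 1) / η) * Real.log (M : ℝ)
            + (((k : ℝ) + 1) / η) * Real.log (T : ℝ))) := by
  classical
  have hMpos : (0:ℝ) < M := by exact_mod_cast hM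
  haveI : Nonempty (Fin M) := Fin.pos_iff_nonempty.mp hM
  set Z : ℕ → ℝ := fun t => ∑ j, v t j * Real.exp (-η * ℓ (xe j t) (y t)) with hZdef
  have hZeq : ∀ t, Z t = ∑ j, v t j * Real.exp (-η * ℓ (xe j t) (y t)) := fun t => rfl
  set w : ℕ → Fin M → ℝ :=
    fun t i => v t i * Real.exp (-η * ℓ (xe i t) (y t)) / Z t with hwdef
  have hweq : ∀ t i, w t i = v t i * Real.exp (-η * ℓ (xe i t) (y t)) / Z t := fun t i => rfl
  -- positivity of weights
  have hvpos : ∀ t, 1 ≤ t → ∀ i, 0 < v t i := by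
    intro t ht
    induction t, ht using Nat.le_induction with
    | base => intro i; rw [hv1]; positivity
    | succ t ht ih =>
      intro i
      rw [hvupd t ht i]
      have hαt := hα (t+1) (by omega)
      have h1 : 0 ≤ (1 - α (t+1)) *
          (v t i * Real.exp (-η * ℓ (xe i t) (y t)) /
            ∑ j, v t j * Real.exp (-η * ℓ (xe j t) (y t))) := by
        apply mul_nonneg (by linarith [hαt.2])
        apply div_nonneg
        · exact mul_nonneg (le_of_lt (ih i)) (Real.exp_nonneg _)
        · exact Finset.sum_nonneg fun j _ => mul_nonneg (le_of_lt (ih j)) (Real.exp_nonneg _)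
      have h2 : 0 < α (t+1) / (M:ℝ) := div_pos hαt.1 hMpos
      linarith
  have hZpos : ∀ t, 1 ≤ t → 0 < Z t := by
    intro t ht
    rw [hZeq t]
    exact Finset.sum_pos (fun j _ => mul_pos (hvpos t ht j) (Real.exp_pos _)) Finset.univ_nonempty
  have hvsum : ∀ t, 1 ≤ t → ∑ i, v t i = 1 := by
    intro t ht
    induction t, ht using Nat.le_induction with
    | base =>
      simp only [hv1, Finset.sum_const, Finset.card_univ, Fintype.card_fin, nsmul_eq_mul]
      field_simp
    | succ t ht ih =>
      have hZ := hZpos t ht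
      calc ∑ i, v (t+1) i
          = ∑ i, ((1 - α (t+1)) *
              (v t i * Real.exp (-η * ℓ (xe i t) (y t)) /
                ∑ j, v t j * Real.exp (-η * ℓ (xe j t) (y t)))
              + α (t+1) / (M:ℝ)) :=
            Finset.sum_congr rfl fun i _ => hvupd t ht i
        _ = (1 - α (t+1)) *
              ((∑ i, v t i * Real.exp (-η * ℓ (xe i t) (y t))) /
                ∑ j, v t j * Real.exp (-η * ℓ (xe j t) (y t)))
              + (M:ℝ) * (α (t+1) / (M:ℝ)) := by
            rw [Finset.sum_add_distrib, ← Finset.mul_sum, ← Finset.sum_div]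
            simp [Finset.card_univ, mul_comm]
        _ = 1 := by
            rw [div_self (by rw [← hZeq t]; exact hZ.ne')]
            field_simp
            ring
  have hwpos : ∀ t, 1 ≤ t → ∀ i, 0 < w t i := by
    intro t ht i
    rw [hweq]
    exact div_pos (mul_pos (hvpos t ht i) (Real.exp_pos _)) (hZpos t ht)
  have hwle : ∀ t, 1 ≤ t → ∀ i, w t i ≤ 1 := by
    intro t ht i
    rw [hweq, div_le_one (hZpos t ht), hZeq t]
    exact Finset.single_le_sum
      (f := fun j => v t j * Real.exp (-η * ℓ (xe j t) (y t)))
      (fun j _ => mul_nonneg (hvpos t ht j).le (Real.exp_pos _).le) (Finset.mem_univ i)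
  have hloss : ∀ t, 1 ≤ t → ℓ (xl t) (y t) ≤ -(1/η) * Real.log (Z t) := by
    intro t ht
    rw [hxl t ht, hZeq t]
    exact hexp (y t) M hM (fun i => xe i t) (fun i => hxe i t) (v t)
      (fun i => (hvpos t ht i).le) (hvsum t ht)
  have hlogw : ∀ t, 1 ≤ t → ∀ i,
      Real.log (w t i) = Real.log (v t i) + (-η * ℓ (xe i t) (y t)) - Real.log (Z t) := by
    intro t ht i
    rw [hweq, Real.log_div (mul_pos (hvpos t ht i) (Real.exp_pos _)).ne' (hZpos t ht).ne',
        Real.log_mul (hvpos t ht i).ne' (Real.exp_ne_zero _), Real.log_exp]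
  -- abbreviations
  set a : ℕ → ℝ := fun t => Real.log (w t (iseq t)) with hadef
  set b : ℕ → ℝ := fun t => Real.log (v t (iseq t)) with hbdef
  have hab : ∀ t, 1 ≤ t →
      -(1/η) * Real.log (Z t) - ℓ (xe (iseq t) t) (y t) = (1/η) * (a t - b t) := by
    intro t ht
    have := hlogw t ht (iseq t)
    show -(1/η) * Real.log (Z t) - ℓ (xe (iseq t) t) (y t)
      = (1/η) * (Real.log (w t (iseq t)) - Real.log (v t (iseq t)))
    rw [this]
    field_simp
    ring
  -- strict monotonicity of σ
  have hσsm : ∀ j, 1 ≤ j → ∀ j', j < j' → j' ≤ k → σ j < σ j' := by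
    intro j hj j' hlt
    induction j', hlt using Nat.le_induction with
    | base => intro hk; exact hσmono j hj (by omega)
    | succ j' hj' ih =>
      intro hk
      have h1 : σ j < σ j' := ih (by omega)
      have h2 : σ j' < σ (j'+1) := hσmono j' (by omega) (by omega)
      omega
  have hσinj : ∀ j ∈ Finset.Icc 1 k, ∀ j' ∈ Finset.Icc 1 k, σ j = σ j' → j = j' := by
    intro j hj j' hj' heq
    rw [Finset.mem_Icc] at hj hj'
    rcases lt_trichotomy j j' with h | h | h
    · exact absurd heq (hσsm j hj.1 j' h hj'.2).ne
    · exact h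
    · exact absurd heq.symm (hσsm j' hj'.1 j h hj.2).ne
  have hS : (Finset.Icc 2 T).filter (fun t => iseq t ≠ iseq (t-1))
      = (Finset.Icc 1 k).image σ := by
    ext t
    simp only [Finset.mem_filter, Finset.mem_image, Finset.mem_Icc]
    constructor
    · rintro ⟨⟨h2, hT'⟩, hne⟩
      obtain ⟨j, hj, hjt⟩ := (hshift t h2 hT').mp hne
      exact ⟨j, Finset.mem_Icc.mp hj, hjt⟩
    · rintro ⟨j, ⟨hj1, hjk⟩, rfl⟩
      have hr := hσrange j hj1 hjk
      exact ⟨⟨hr.1, hr.2⟩, (hshift _ hr.1 hr.2).mpr ⟨j, Finset.mem_Icc.mpr ⟨hj1, hjk⟩, rfl⟩⟩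
  -- pointwise bound for t ∈ [2, T]
  have hpt : ∀ t ∈ Finset.Icc 2 T, a (t-1) - b t ≤
      Real.log (1 / (1 - α t)) +
        (if iseq t ≠ iseq (t-1) then Real.log M + Real.log (1 / α t) else 0) := by
    intro t htm
    rw [Finset.mem_Icc] at htm
    obtain ⟨h2, hT'⟩ := htm
    have hαt := hα t h2
    have ht1 : 1 ≤ t - 1 := by omega
    have hvu := hvupd (t-1) ht1 (iseq t)
    rw [show t - 1 + 1 = t by omega] at hvu
    rw [← hZeq (t-1), ← hweq (t-1) (iseq t)] at hvu
    have hw1 : 0 < w (t-1) (iseq t) := hwpos (t-1) ht1 (iseq t)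
    have h1α : 0 < 1 - α t := by linarith [hαt.2]
    have hlog1α : Real.log (1 / (1 - α t)) = -Real.log (1 - α t) := by
      rw [one_div, Real.log_inv]
    by_cases hsh : iseq t ≠ iseq (t-1)
    · rw [if_pos hsh]
      have hge : α t / (M:ℝ) ≤ v t (iseq t) := by
        have : 0 ≤ (1 - α t) * w (t-1) (iseq t) := mul_nonneg h1α.le hw1.le
        linarith [hvu.ge, hvu.le, this]
      have hbt : Real.log (α t / (M:ℝ)) ≤ b t :=
        Real.log_le_log (div_pos hαt.1 hMpos) hge
      rw [Real.log_div hαt.1.ne' hMpos.ne'] at hbt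
      have hat : a (t-1) ≤ 0 :=
        Real.log_nonpos (hwpos (t-1) ht1 (iseq (t-1))).le (hwle (t-1) ht1 (iseq (t-1)))
      have hαlog : Real.log (1 / α t) = -Real.log (α t) := by rw [one_div, Real.log_inv]
      have hnn : 0 ≤ Real.log (1 / (1 - α t)) := by
        rw [hlog1α]
        have : Real.log (1 - α t) ≤ 0 := Real.log_nonpos h1α.le (by linarith [hαt.1])
        linarith
      rw [hαlog]
      show a (t-1) - b t ≤ _
      linarith
    · rw [if_neg hsh]
      push_neg at hsh
      have hge : (1 - α t) * w (t-1) (iseq t) ≤ v t (iseq t) := by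
        have : 0 ≤ α t / (M:ℝ) := (div_pos hαt.1 hMpos).le
        linarith [hvu.ge]
      have hbt : Real.log ((1 - α t) * w (t-1) (iseq t)) ≤ b t :=
        Real.log_le_log (mul_pos h1α hw1) hge
      rw [Real.log_mul h1α.ne' hw1.ne'] at hbt
      have hae : a (t-1) = Real.log (w (t-1) (iseq t)) := by
        show Real.log (w (t-1) (iseq (t-1))) = _
        rw [hsh]
      rw [hlog1α]
      show a (t-1) - b t ≤ _
      rw [hae]
      linarith
  -- main chain
  have hcard : ((Finset.Icc 1 k).card : ℝ) = k := by
    rw [Nat.card_Icc]; push_cast; ring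
  have hmain : (∑ t ∈ Finset.Icc 1 T, ℓ (xl t) (y t))
      - (∑ t ∈ Finset.Icc 1 T, ℓ (xe (iseq t) t) (y t))
      ≤ (((k : ℝ) + 1) / η) * Real.log (M : ℝ)
        + (1/η) * ∑ j ∈ Finset.Icc 1 k, Real.log (1 / α (σ j))
        + (1/η) * ∑ t ∈ Finset.Icc 2 T, Real.log (1 / (1 - α t)) := by
    have step1 : (∑ t ∈ Finset.Icc 1 T, ℓ (xl t) (y t))
        - (∑ t ∈ Finset.Icc 1 T, ℓ (xe (iseq t) t) (y t))
        ≤ ∑ t ∈ Finset.Icc 1 T, (1/η) * (a t - b t) := by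
      rw [← Finset.sum_sub_distrib]
      apply Finset.sum_le_sum
      intro t htm
      rw [Finset.mem_Icc] at htm
      rw [← hab t htm.1]
      have := hloss t htm.1
      linarith
    have step2 : ∑ t ∈ Finset.Icc 1 T, (1/η) * (a t - b t)
        = (1/η) * (a T - b 1 + ∑ t ∈ Finset.Icc 2 T, (a (t-1) - b t)) := by
      rw [← Finset.mul_sum, ds_telescope a b T hT]
    have haT : a T ≤ 0 :=
      Real.log_nonpos (hwpos T hT (iseq T)).le (hwle T hT (iseq T))
    have hb1 : b 1 = -Real.log M := by
      show Real.log (v 1 (iseq 1)) = _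
      rw [hv1, one_div, Real.log_inv]
    have step3 : ∑ t ∈ Finset.Icc 2 T, (a (t-1) - b t)
        ≤ (∑ t ∈ Finset.Icc 2 T, Real.log (1 / (1 - α t)))
          + ((k:ℝ) * Real.log M + ∑ j ∈ Finset.Icc 1 k, Real.log (1 / α (σ j))) := by
      calc ∑ t ∈ Finset.Icc 2 T, (a (t-1) - b t)
          ≤ ∑ t ∈ Finset.Icc 2 T, (Real.log (1 / (1 - α t)) +
              (if iseq t ≠ iseq (t-1) then Real.log M + Real.log (1 / α t) else 0)) :=
            Finset.sum_le_sum hpt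
        _ = (∑ t ∈ Finset.Icc 2 T, Real.log (1 / (1 - α t)))
            + ∑ t ∈ (Finset.Icc 2 T).filter (fun t => iseq t ≠ iseq (t-1)),
                (Real.log M + Real.log (1 / α t)) := by
            rw [Finset.sum_add_distrib, Finset.sum_filter]
        _ = (∑ t ∈ Finset.Icc 2 T, Real.log (1 / (1 - α t)))
            + ∑ j ∈ Finset.Icc 1 k, (Real.log M + Real.log (1 / α (σ j))) := by
            rw [hS, Finset.sum_image hσinj]
        _ = (∑ t ∈ Finset.Icc 2 T, Real.log (1 / (1 - α t)))
            + ((k:ℝ) * Real.log M + ∑ j ∈ Finset.Icc 1 k, Real.log (1 / α (σ j))) := by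
            rw [Finset.sum_add_distrib, Finset.sum_const, nsmul_eq_mul, hcard]
    have hη' : (0:ℝ) ≤ 1/η := by positivity
    calc (∑ t ∈ Finset.Icc 1 T, ℓ (xl t) (y t))
        - (∑ t ∈ Finset.Icc 1 T, ℓ (xe (iseq t) t) (y t))
        ≤ (1/η) * (a T - b 1 + ∑ t ∈ Finset.Icc 2 T, (a (t-1) - b t)) := by
          rw [← step2]; exact step1
      _ ≤ (1/η) * (Real.log M + ((∑ t ∈ Finset.Icc 2 T, Real.log (1 / (1 - α t)))
            + ((k:ℝ) * Real.log M + ∑ j ∈ Finset.Icc 1 k, Real.log (1 / α (σ j))))) := by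
          apply mul_le_mul_of_nonneg_left _ hη'
          rw [hb1]
          linarith
      _ = (((k : ℝ) + 1) / η) * Real.log (M : ℝ)
            + (1/η) * ∑ j ∈ Finset.Icc 1 k, Real.log (1 / α (σ j))
            + (1/η) * ∑ t ∈ Finset.Icc 2 T, Real.log (1 / (1 - α t)) := by ring
  refine ⟨hmain, fun hα1 => ?_⟩
  have hσlog : ∑ j ∈ Finset.Icc 1 k, Real.log (1 / α (σ j))
      = ∑ j ∈ Finset.Icc 1 k, Real.log (σ j : ℝ) := by
    apply Finset.sum_congr rfl
    intro j hj
    rw [Finset.mem_Icc] at hj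
    have hr := hσrange j hj.1 hj.2
    rw [hα1 (σ j) hr.1, one_div_one_div]
  have hlogTsum := ds_logT α hα1 T hT
  constructor
  · rw [← hσlog, ← hlogTsum]
    exact hmain
  · have hη' : (0:ℝ) ≤ 1/η := by positivity
    have hlogTnn : 0 ≤ Real.log (T:ℝ) := Real.log_nonneg (by exact_mod_cast hT)
    have hsum : ∑ j ∈ Finset.Icc 1 k, Real.log (σ j : ℝ) ≤ (k:ℝ) * Real.log (T:ℝ) := by
      calc ∑ j ∈ Finset.Icc 1 k, Real.log (σ j : ℝ)
          ≤ ∑ j ∈ Finset.Icc 1 k, Real.log (T:ℝ) := by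
            apply Finset.sum_le_sum
            intro j hj
            rw [Finset.mem_Icc] at hj
            have hr := hσrange j hj.1 hj.2
            exact Real.log_le_log (by exact_mod_cast (by omega : 0 < σ j))
              (by exact_mod_cast hr.2)
        _ = (k:ℝ) * Real.log (T:ℝ) := by
            rw [Finset.sum_const, nsmul_eq_mul, hcard]
    have h1 : (1/η) * ∑ j ∈ Finset.Icc 1 k, Real.log (σ j : ℝ)
        ≤ (1/η) * ((k:ℝ) * Real.log (T:ℝ)) := mul_le_mul_of_nonneg_left hsum hη'
    have h2 : (1/η) * ((k:ℝ) * Real.log (T:ℝ)) + (1/η) * Real.log (T:ℝ)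
        = (((k : ℝ) + 1) / η) * Real.log (T : ℝ) := by ring
    linarith
end
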